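/- Let 0 < T ≤ π/2, π − T < φ_W < π, and T < −tan φ_W (i.e., (φ_W, T) ∈ D₂'). Then F¹_{φ_W,T} has exactly two roots in the open interval (0,1). -/

import Mathlib

open Real

/-- The determinant function
`F¹_{φ_W,T}(a) = -2a - a² sin(2aT) sin(2φ_W) - sin(2aT) sin(2φ_W) + 2a cos(2aT) cos(2φ_W)`. -/
noncomputable def F1 (φW T a : ℝ) : ℝ :=
  -2 * a - a ^ 2 * Real.sin (2 * a * T) * Real.sin (2 * φW)
    - Real.sin (2 * a * T) * Real.sin (2 * φW)
    + 2 * a * Real.cos (2 * a * T) * Real.cos (2 * φW)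

open Set Filter Topology

private lemma F1_factor (φW T a : ℝ) :
    F1 φW T a
    = -4 * (a * Real.cos (a*T) * Real.sin φW + Real.sin (a*T) * Real.cos φW)
      * (a * Real.sin (a*T) * Real.cos φW + Real.cos (a*T) * Real.sin φW) := by
  unfold F1
  have h1 : 2 * a * T = 2 * (a * T) := by ring
  rw [h1, Real.sin_two_mul (a*T), Real.cos_two_mul (a*T), Real.sin_two_mul φW,
    Real.cos_two_mul φW]
  linear_combination (4*a*Real.cos (a*T)^2) * (Real.sin_sq_add_cos_sq φW)
    + (4*a*Real.cos φW^2) * (Real.sin_sq_add_cos_sq (a*T))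

set_option maxHeartbeats 1000000 in
theorem F1_two_roots_on_D2' (φW T : ℝ) (hT0 : 0 < T) (hT : T ≤ Real.pi / 2)
    (hφ1 : Real.pi - T < φW) (hφ2 : φW < Real.pi) (htan : T < -Real.tan φW) :
    {a ∈ Set.Ioo (0:ℝ) 1 | F1 φW T a = 0}.encard = 2 := by
  have hπ : (0:ℝ) < π := Real.pi_pos
  have hφhalf : π / 2 < φW := by linarith
  have hsin : 0 < Real.sin φW := Real.sin_pos_of_pos_of_lt_pi (by linarith) hφ2
  have hcos : Real.cos φW < 0 := Real.cos_neg_of_pi_div_two_lt_of_lt hφhalf (by linarith)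
  have htanφ : Real.tan φW < 0 := by
    rw [Real.tan_eq_sin_div_cos]; exact div_neg_of_pos_of_neg hsin hcos
  set M : ℝ := -Real.tan φW with hMdef
  have hTM : T < M := htan
  have hM : 0 < M := hT0.trans hTM
  have htφ : Real.tan φW = -M := by rw [hMdef]; ring
  have haTlt : ∀ a : ℝ, a < 1 → a * T < π/2 := by intro a ha; nlinarith
  have hcosaT : ∀ a : ℝ, 0 ≤ a → a < 1 → 0 < Real.cos (a*T) := by
    intro a h0 h1
    exact Real.cos_pos_of_mem_Ioo ⟨by nlinarith, haTlt a h1⟩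
  set G : ℝ → ℝ := fun a => Real.tan (a*T) + a * Real.tan φW with hGdef
  set H : ℝ → ℝ := fun a => a * Real.tan (a*T) + Real.tan φW with hHdef
  -- equivalence of root conditions
  have key : ∀ a : ℝ, 0 < a → a < 1 → (F1 φW T a = 0 ↔ G a = 0 ∨ H a = 0) := by
    intro a h0 h1
    have hcpos := hcosaT a h0.le h1
    have hc : Real.cos (a*T) ≠ 0 := hcpos.ne'
    have hC : Real.cos φW ≠ 0 := hcos.ne
    have hfac : F1 φW T a
        = (-4 * Real.cos (a*T)^2 * Real.cos φW^2) * (G a * H a) := by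
      rw [F1_factor]
      simp only [hGdef, hHdef, Real.tan_eq_sin_div_cos]
      field_simp
      ring
    have hpre : (-4 * Real.cos (a*T)^2 * Real.cos φW^2) ≠ 0 := by
      have h2 : 0 < Real.cos (a*T)^2 := by positivity
      have h3 : 0 < Real.cos φW^2 := by positivity
      nlinarith
    constructor
    · intro h
      rw [hfac] at h
      rcases mul_eq_zero.1 h with h' | h'
      · exact absurd h' hpre
      · exact mul_eq_zero.1 h'
    · intro h
      rw [hfac]
      rcases h with h | h
      · rw [h, zero_mul, mul_zero]
      · rw [h, mul_zero, mul_zero]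
  -- continuity of a ↦ tan (a*T)
  have hcont : ∀ a : ℝ, 0 ≤ a → a < 1 → ContinuousAt (fun x : ℝ => Real.tan (x*T)) a := by
    intro a h0 h1
    have : Real.cos (a*T) ≠ 0 := (hcosaT a h0 h1).ne'
    exact ContinuousAt.comp (g := Real.tan) (f := fun x : ℝ => x * T)
      (Real.continuousAt_tan.2 this) ((continuous_mul_right T).continuousAt)
  -- existence of c with M < c * tan (c*T)
  have hc : ∃ c : ℝ, 0 < c ∧ c < 1 ∧ M < c * Real.tan (c*T) := by
    rcases lt_or_eq_of_le hT with hTlt | hTeq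
    · -- case T < π/2
      have htanT : M < Real.tan T := by
        have h1 : Real.tan (φW - π) = Real.tan φW := Real.tan_periodic.sub_eq φW
        have h2 : Real.tan (-T) < Real.tan (φW - π) :=
          Real.strictMonoOn_tan ⟨by linarith, by linarith⟩
            ⟨by linarith, by linarith⟩ (by linarith)
        rw [Real.tan_neg, h1] at h2
        simp only [hMdef]; linarith
      have hk : ContinuousAt (fun a : ℝ => a * Real.tan (a*T)) 1 := by
        have hco : Real.cos ((1:ℝ)*T) ≠ 0 := by
          rw [one_mul]; exact (Real.cos_pos_of_mem_Ioo ⟨by linarith, hTlt⟩).ne'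
        exact continuousAt_id.mul
          (ContinuousAt.comp (g := Real.tan) (f := fun x : ℝ => x * T)
            (Real.continuousAt_tan.2 hco) ((continuous_mul_right T).continuousAt))
      have hk1 : (fun a : ℝ => a * Real.tan (a*T)) 1 = Real.tan T := by simp
      have hev : ∀ᶠ a in 𝓝[<] (1:ℝ), M < a * Real.tan (a*T) := by
        have h3 : Tendsto (fun a : ℝ => a * Real.tan (a*T)) (𝓝[<] (1:ℝ)) (𝓝 (Real.tan T)) := by
          rw [← hk1]; exact hk.continuousWithinAt
        exact h3.eventually (eventually_gt_nhds htanT)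
      have hmem : ∀ᶠ a in 𝓝[<] (1:ℝ), a ∈ Ioo (0:ℝ) 1 :=
        eventually_of_mem (Ioo_mem_nhdsLT_of_mem ⟨zero_lt_one, le_refl 1⟩) (fun x hx => hx)
      obtain ⟨c, hcM, hc01⟩ := (hev.and hmem).exists
      exact ⟨c, hc01.1, hc01.2, hcM⟩
    · -- case T = π/2
      have h1 : Tendsto (fun a : ℝ => a * T) (𝓝[<] (1:ℝ)) (𝓝[<] T) := by
        rw [tendsto_nhdsWithin_iff]
        constructor
        · have := (tendsto_id.mul_const T : Tendsto (fun a : ℝ => a * T) (𝓝 1) (𝓝 (1 * T)))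
          rw [one_mul] at this
          exact this.mono_left nhdsWithin_le_nhds
        · filter_upwards [self_mem_nhdsWithin] with a ha
          exact (mul_lt_mul_of_pos_right ha hT0).trans_le (by rw [one_mul])
      have h2 : Tendsto (fun a : ℝ => Real.tan (a*T)) (𝓝[<] (1:ℝ)) atTop := by
        have := Real.tendsto_tan_pi_div_two
        rw [← hTeq] at this
        exact this.comp h1
      have h3 : Tendsto (fun a : ℝ => a * Real.tan (a*T)) (𝓝[<] (1:ℝ)) atTop :=
        Filter.Tendsto.pos_mul_atTop zero_lt_one
          (tendsto_id.mono_left nhdsWithin_le_nhds) h2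
      have hev : ∀ᶠ a in 𝓝[<] (1:ℝ), M < a * Real.tan (a*T) := h3.eventually_gt_atTop M
      have hmem : ∀ᶠ a in 𝓝[<] (1:ℝ), a ∈ Ioo (0:ℝ) 1 :=
        eventually_of_mem (Ioo_mem_nhdsLT_of_mem ⟨zero_lt_one, le_refl 1⟩) (fun x hx => hx)
      obtain ⟨c, hcM, hc01⟩ := (hev.and hmem).exists
      exact ⟨c, hc01.1, hc01.2, hcM⟩
  obtain ⟨c, hc0, hc1, hcM⟩ := hc
  have htc : 0 < Real.tan (c*T) := by nlinarith
  -- root of H via IVT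
  have hH0 : H 0 < 0 := by simp only [hHdef]; simpa using htanφ
  have hHc : 0 < H c := by simp only [hHdef]; linarith
  have hcontH : ContinuousOn H (Icc 0 c) := by
    intro x hx
    exact ((continuousAt_id.mul (hcont x hx.1 (lt_of_le_of_lt hx.2 hc1))).add
      continuousAt_const).continuousWithinAt
  obtain ⟨a₂, ha₂mem, hHa₂⟩ := intermediate_value_Ioo hc0.le hcontH ⟨hH0, hHc⟩
  have ha₂ : a₂ ∈ Ioo (0:ℝ) 1 := ⟨ha₂mem.1, ha₂mem.2.trans hc1⟩
  -- small point where G < 0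
  have hsmall : ∃ a₀ : ℝ, 0 < a₀ ∧ a₀ < c ∧ G a₀ < 0 := by
    have hco0 : Real.cos ((0:ℝ)*T) ≠ 0 := by simp
    have hd : HasDerivAt (fun a : ℝ => Real.tan (a*T)) T 0 := by
      have := (Real.hasDerivAt_tan hco0).comp 0 ((hasDerivAt_id (0:ℝ)).mul_const T)
      simpa [Function.comp_def] using this
    have hslope := hasDerivAt_iff_tendsto_slope.1 hd
    have hslope' : Tendsto (slope (fun a : ℝ => Real.tan (a*T)) 0) (𝓝[>] (0:ℝ)) (𝓝 T) :=
      hslope.mono_left (nhdsWithin_mono _ (fun x hx => ne_of_gt hx))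
    have hev1 : ∀ᶠ a in 𝓝[>] (0:ℝ), slope (fun a : ℝ => Real.tan (a*T)) 0 a < M :=
      hslope'.eventually (eventually_lt_nhds hTM)
    have hmem : ∀ᶠ a in 𝓝[>] (0:ℝ), a ∈ Ioo (0:ℝ) c :=
      eventually_of_mem (Ioo_mem_nhdsGT_of_mem ⟨le_refl 0, hc0⟩) (fun x hx => hx)
    obtain ⟨a₀, hsl, ha₀⟩ := (hev1.and hmem).exists
    refine ⟨a₀, ha₀.1, ha₀.2, ?_⟩
    rw [slope_def_field] at hsl
    simp only [zero_mul, Real.tan_zero, sub_zero] at hsl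
    have h4 : Real.tan (a₀*T) < a₀ * M := by
      rw [div_lt_iff₀ ha₀.1] at hsl
      linarith [hsl]
    simp only [hGdef, htφ]
    nlinarith
  obtain ⟨a₀, ha₀0, ha₀c, hGa₀⟩ := hsmall
  have hGc : 0 < G c := by
    simp only [hGdef, htφ]
    nlinarith [mul_pos hM (sub_pos.2 hc1)]
  have hcontG : ContinuousOn G (Icc a₀ c) := by
    intro x hx
    have hx0 : 0 ≤ x := le_trans ha₀0.le hx.1
    exact ((hcont x hx0 (lt_of_le_of_lt hx.2 hc1)).add
      (continuousAt_id.mul continuousAt_const)).continuousWithinAt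
  obtain ⟨a₁, ha₁mem, hGa₁⟩ := intermediate_value_Ioo ha₀c.le hcontG ⟨hGa₀, hGc⟩
  have ha₁ : a₁ ∈ Ioo (0:ℝ) 1 := ⟨ha₀0.trans ha₁mem.1, ha₁mem.2.trans hc1⟩
  -- H strictly monotone on [0,1)
  have hHmono : ∀ x y : ℝ, 0 ≤ x → x < y → y < 1 → H x < H y := by
    intro x y hx hxy hy
    have hxT : 0 ≤ x * T := by positivity
    have h1 : Real.tan (x*T) < Real.tan (y*T) :=
      Real.tan_lt_tan_of_nonneg_of_lt_pi_div_two hxT (haTlt y hy)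
        (mul_lt_mul_of_pos_right hxy hT0)
    have h2 : 0 ≤ Real.tan (x*T) :=
      Real.tan_nonneg_of_nonneg_of_le_pi_div_two hxT (le_of_lt (haTlt x (hxy.trans hy)))
    simp only [hHdef]
    nlinarith
  -- G strictly convex on [0,1)
  have hGconv : StrictConvexOn ℝ (Ico (0:ℝ) 1) G := by
    apply StrictMonoOn.strictConvexOn_of_deriv (convex_Ico 0 1)
    · intro x hx
      exact ((hcont x hx.1 hx.2).add
        (continuousAt_id.mul continuousAt_const)).continuousWithinAt
    · rw [interior_Ico]
      have hderiv : ∀ x ∈ Ioo (0:ℝ) 1, deriv G x = T / Real.cos (x*T)^2 + Real.tan φW := by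
        intro x hx
        have hcx : Real.cos (x*T) ≠ 0 := (hcosaT x hx.1.le hx.2).ne'
        have h1' := (Real.hasDerivAt_tan hcx).comp x ((hasDerivAt_id x).mul_const T)
        have h1 : HasDerivAt (fun a : ℝ => Real.tan (a*T)) (1 / Real.cos (x*T)^2 * T) x := by
          simpa [Function.comp_def] using h1'
        have h2 : HasDerivAt G (1 / Real.cos (x*T)^2 * T + Real.tan φW) x := by
          have := h1.add ((hasDerivAt_id x).mul_const (Real.tan φW))
          simpa [hGdef, Pi.add_def] using this
        rw [h2.deriv]; ring
      intro x hx y hy hxy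
      rw [hderiv x hx, hderiv y hy]
      have hcy : 0 < Real.cos (y*T) := hcosaT y hy.1.le hy.2
      have hcx : 0 < Real.cos (x*T) := hcosaT x hx.1.le hx.2
      have hlt : Real.cos (y*T) < Real.cos (x*T) :=
        Real.cos_lt_cos_of_nonneg_of_le_pi (mul_nonneg hx.1.le hT0.le)
          (by nlinarith [haTlt y hy.2]) (mul_lt_mul_of_pos_right hxy hT0)
      have h3 : T / Real.cos (x*T)^2 < T / Real.cos (y*T)^2 := by
        have h4 : Real.cos (y*T)^2 < Real.cos (x*T)^2 := by nlinarith
        rw [div_lt_div_iff₀ (pow_pos hcx 2) (pow_pos hcy 2)]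
        nlinarith [mul_lt_mul_of_pos_left h4 hT0]
      linarith
  -- uniqueness of the G-root in (0,1)
  have hGuniq : ∀ r s : ℝ, 0 < r → r < s → s < 1 → G r = 0 → G s = 0 → False := by
    intro r s hr hrs hs hGr hGs
    have hG0 : G 0 = 0 := by simp [hGdef]
    have hs0 : 0 < s := hr.trans hrs
    have hb0 : 0 < r / s := by positivity
    have hb1 : r / s < 1 := (div_lt_one hs0).2 hrs
    have hkey := hGconv.2 (show (0:ℝ) ∈ Ico (0:ℝ) 1 from ⟨le_refl 0, zero_lt_one⟩)
      (show s ∈ Ico (0:ℝ) 1 from ⟨hs0.le, hs⟩) hs0.ne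
      (show 0 < 1 - r/s by linarith) hb0 (by ring)
    rw [smul_eq_mul, smul_eq_mul, smul_eq_mul, smul_eq_mul, mul_zero, zero_add,
      hG0, hGs, mul_zero, mul_zero, add_zero] at hkey
    rw [div_mul_cancel₀ r hs0.ne'] at hkey
    rw [hGr] at hkey
    exact lt_irrefl 0 hkey
  -- the two roots are distinct
  have hne : a₁ ≠ a₂ := by
    intro h
    have hH1 : H a₁ = 0 := h ▸ hHa₂
    have hG1 : G a₁ = 0 := hGa₁
    simp only [hGdef, hHdef, htφ] at hG1 hH1
    have h1 : Real.tan (a₁*T) = a₁ * M := by linarith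
    rw [h1] at hH1
    have ha₁0 := ha₁.1
    have ha₁1 := ha₁.2
    have hsq : a₁ * a₁ < 1 := by nlinarith
    nlinarith [mul_lt_mul_of_pos_right hsq hM]
  -- set equality
  have hseteq : {a ∈ Set.Ioo (0:ℝ) 1 | F1 φW T a = 0} = {a₁, a₂} := by
    ext a
    simp only [Set.mem_setOf_eq, Set.mem_insert_iff, Set.mem_singleton_iff]
    constructor
    · rintro ⟨⟨ha0, ha1⟩, hF⟩
      rcases (key a ha0 ha1).1 hF with h | h
      · left
        rcases lt_trichotomy a a₁ with hlt | heq | hgt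
        · exact absurd (hGuniq a a₁ ha0 hlt ha₁.2 h hGa₁) (fun hf => hf)
        · exact heq
        · exact absurd (hGuniq a₁ a ha₁.1 hgt ha1 hGa₁ h) (fun hf => hf)
      · right
        rcases lt_trichotomy a a₂ with hlt | heq | hgt
        · have := hHmono a a₂ ha0.le hlt ha₂.2
          rw [h, hHa₂] at this; exact absurd this (lt_irrefl 0)
        · exact heq
        · have := hHmono a₂ a ha₂.1.le hgt ha1
          rw [h, hHa₂] at this; exact absurd this (lt_irrefl 0)
    · rintro (rfl | rfl)
      · exact ⟨⟨ha₁.1, ha₁.2⟩, (key a ha₁.1 ha₁.2).2 (Or.inl hGa₁)⟩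
      · exact ⟨⟨ha₂.1, ha₂.2⟩, (key a ha₂.1 ha₂.2).2 (Or.inr hHa₂)⟩
  rw [hseteq]
  exact Set.encard_pair hne
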